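/- Let X be a compact metric space and let l : Y × Λ × X → ℝ be continuous, where Y and Λ are compact metric spaces. Then the function L* : P(X) → ℝ defined on the space of Borel probability measures on X (with the topology of weak convergence) by L*(Q) = inf_{y ∈ Y} sup_{λ ∈ Λ} E_Q[l(y, λ, x)] is continuous. -/

import Mathlib

open MeasureTheory Filter Topology BoundedContinuousFunction

/-- Joint continuity of the pairing between probability measures and bounded
continuous functions. -/
lemma pairing_continuous {X : Type*} [MetricSpace X] [MeasurableSpace X] [BorelSpace X] :
    Continuous fun p : ProbabilityMeasure X × (X →ᵇ ℝ) =>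
      ∫ x, p.2 x ∂(p.1 : Measure X) := by
  rw [continuous_iff_continuousAt]
  rintro ⟨Q₀, f₀⟩
  have h1 : ContinuousAt (fun p : ProbabilityMeasure X × (X →ᵇ ℝ) =>
      ∫ x, f₀ x ∂(p.1 : Measure X)) (Q₀, f₀) :=
    ((ProbabilityMeasure.continuous_integral_boundedContinuousFunction f₀).comp
      continuous_fst).continuousAt
  have h2 : Tendsto (fun p : ProbabilityMeasure X × (X →ᵇ ℝ) =>
      (∫ x, p.2 x ∂(p.1 : Measure X)) - ∫ x, f₀ x ∂(p.1 : Measure X))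
      (𝓝 (Q₀, f₀)) (𝓝 0) := by
    apply squeeze_zero_norm (a := fun p : ProbabilityMeasure X × (X →ᵇ ℝ) => dist p.2 f₀)
    · rintro ⟨Q, f⟩
      have key : (∫ x, f x ∂(Q : Measure X)) - ∫ x, f₀ x ∂(Q : Measure X)
          = ∫ x, (f - f₀) x ∂(Q : Measure X) := by
        simp [integral_sub (f.integrable _) (f₀.integrable _)]
      rw [key, dist_eq_norm]
      exact (f - f₀).norm_integral_le_norm _
    · have hc : Continuous fun p : ProbabilityMeasure X × (X →ᵇ ℝ) => dist p.2 f₀ :=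
        continuous_snd.dist continuous_const
      have h := hc.tendsto (Q₀, f₀)
      simpa only [dist_self] using h
  have h3 := h2.add h1
  simp only [sub_add_cancel, zero_add] at h3
  exact h3

/-- The inf-sup functional on continuous functions on a compact product space is
1-Lipschitz, hence continuous. -/
lemma infSup_lipschitz {Y Λ : Type*} [MetricSpace Y] [CompactSpace Y] [Nonempty Y]
    [MetricSpace Λ] [CompactSpace Λ] [Nonempty Λ] :
    LipschitzWith 1 (fun f : C(Y × Λ, ℝ) => ⨅ y : Y, ⨆ lam : Λ, f (y, lam)) := by
  have key : ∀ f g : C(Y × Λ, ℝ),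
      (⨅ y : Y, ⨆ lam : Λ, f (y, lam)) ≤ (⨅ y : Y, ⨆ lam : Λ, g (y, lam)) + dist f g := by
    intro f g
    obtain ⟨m, hm⟩ := (isCompact_range f.continuous).bddBelow
    have hbddf : ∀ y : Y, BddAbove (Set.range fun lam : Λ => f (y, lam)) := fun y =>
      (isCompact_range (f.continuous.comp (Continuous.prodMk_right y))).bddAbove
    have hbddg : ∀ y : Y, BddAbove (Set.range fun lam : Λ => g (y, lam)) := fun y =>
      (isCompact_range (g.continuous.comp (Continuous.prodMk_right y))).bddAbove
    have hbelow : BddBelow (Set.range fun y : Y => ⨆ lam : Λ, f (y, lam)) := by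
      refine ⟨m, ?_⟩
      rintro _ ⟨y, rfl⟩
      obtain ⟨lam⟩ := (inferInstance : Nonempty Λ)
      exact le_trans (hm (Set.mem_range_self (y, lam))) (le_ciSup (hbddf y) lam)
    rw [← sub_le_iff_le_add]
    refine le_ciInf fun y => ?_
    have h1 : (⨅ y : Y, ⨆ lam : Λ, f (y, lam)) ≤ ⨆ lam : Λ, f (y, lam) :=
      ciInf_le hbelow y
    have h2 : (⨆ lam : Λ, f (y, lam)) ≤ (⨆ lam : Λ, g (y, lam)) + dist f g := by
      refine ciSup_le fun lam => ?_
      have := ContinuousMap.dist_apply_le_dist (f := f) (g := g) (y, lam)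
      have hfg : f (y, lam) ≤ g (y, lam) + dist f g := by
        have := abs_sub_abs_le_abs_sub (f (y, lam)) (g (y, lam))
        have habs : |f (y, lam) - g (y, lam)| ≤ dist f g := by
          rw [← Real.dist_eq]; exact ContinuousMap.dist_apply_le_dist (y, lam)
        linarith [abs_sub_abs_le_abs_sub (f (y, lam)) (g (y, lam)),
          le_abs_self (f (y, lam) - g (y, lam))]
      exact hfg.trans ((add_le_add_iff_right _).mpr (le_ciSup (hbddg y) lam))
    linarith
  rw [lipschitzWith_iff_dist_le_mul]
  intro f g
  rw [NNReal.coe_one, one_mul, Real.dist_eq, abs_sub_le_iff]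
  constructor
  · linarith [key f g]
  · have := key g f
    rw [dist_comm g f] at this
    linarith

/-- Continuity of `Q ↦ inf_y sup_λ E_Q[l(y,λ,x)]` on the space of Borel probability
measures with the weak-convergence topology, for continuous `l` on compact spaces. -/
theorem stmt0 {X Y Λ : Type*}
    [MetricSpace X] [CompactSpace X] [MeasurableSpace X] [BorelSpace X]
    [MetricSpace Y] [CompactSpace Y] [Nonempty Y]
    [MetricSpace Λ] [CompactSpace Λ] [Nonempty Λ]
    (l : Y → Λ → X → ℝ)
    (hl : Continuous fun p : Y × Λ × X => l p.1 p.2.1 p.2.2) :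
    Continuous fun Q : ProbabilityMeasure X =>
      ⨅ y : Y, ⨆ lam : Λ, ∫ x, l y lam x ∂(Q : Measure X) := by
  -- the map `(y, lam) ↦ l y lam ·` as a continuous map into `X →ᵇ ℝ`
  have hk : Continuous fun q : (Y × Λ) × X => l q.1.1 q.1.2 q.2 := by
    have : Continuous fun q : (Y × Λ) × X => (q.1.1, q.1.2, q.2) := by fun_prop
    exact hl.comp this
  let k : C((Y × Λ) × X, ℝ) := ⟨_, hk⟩
  let Φ : (Y × Λ) → (X →ᵇ ℝ) := fun p =>
    (ContinuousMap.isometryEquivBoundedOfCompact X ℝ) (k.curry p)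
  have hΦ : Continuous Φ :=
    (ContinuousMap.isometryEquivBoundedOfCompact X ℝ).isometry.continuous.comp
      k.curry.continuous
  -- joint continuity of the integral
  have hG : Continuous fun p : ProbabilityMeasure X × (Y × Λ) =>
      ∫ x, l p.2.1 p.2.2 x ∂(p.1 : Measure X) := by
    have : Continuous fun p : ProbabilityMeasure X × (Y × Λ) => (p.1, Φ p.2) :=
      continuous_fst.prodMk (hΦ.comp continuous_snd)
    have := pairing_continuous.comp this
    convert this using 2
    rfl
  -- curry it: `Q ↦ (the function (y, lam) ↦ ∫ l y lam dQ)` is continuous into `C(Y × Λ, ℝ)`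
  let G : C(ProbabilityMeasure X × (Y × Λ), ℝ) := ⟨_, hG⟩
  have : (fun Q : ProbabilityMeasure X =>
      ⨅ y : Y, ⨆ lam : Λ, ∫ x, l y lam x ∂(Q : Measure X))
      = (fun f : C(Y × Λ, ℝ) => ⨅ y : Y, ⨆ lam : Λ, f (y, lam)) ∘ (G.curry) := rfl
  rw [this]
  exact infSup_lipschitz.continuous.comp G.curry.continuous
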